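/- In 𝔤(j,c) with Koszul-defined ∇, for any unit vector Z ∈ 𝔷 one has ∇_Z Z = c²A. Consequently, for a k-dimensional subspace 𝔴 ⊆ 𝔷 with orthonormal basis Z₁,…,Z_k, the 'mean curvature' sum Σᵢ ∇_{Zᵢ} Zᵢ equals c²k·A. -/

import Mathlib

open scoped RealInnerProductSpace

/-- In 𝔤(j,c) with the Koszul-defined connection, ∇_Z Z = c²A for
any unit vector Z ∈ 𝔷; consequently, for an orthonormal basis Z₁,…,Z_k of a
k-dimensional subspace of 𝔷, Σᵢ ∇_{Zᵢ} Zᵢ = c²k·A. -/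
theorem stmt_15 {V Z : Type*}
    [NormedAddCommGroup V] [InnerProductSpace ℝ V] [FiniteDimensional ℝ V]
    [NormedAddCommGroup Z] [InnerProductSpace ℝ Z] [FiniteDimensional ℝ Z]
    (c : ℝ) (hc : 0 < c)
    (j : Z →ₗ[ℝ] V →ₗ[ℝ] V)
    (hskew : ∀ (z : Z) (x y : V), ⟪j z x, y⟫ = -⟪x, j z y⟫)
    (ω : V →ₗ[ℝ] V →ₗ[ℝ] Z)
    (hω : ∀ (x y : V) (z : Z), ⟪ω x y, z⟫ = ⟪j z x, y⟫)
    (B : V × Z × ℝ → V × Z × ℝ → V × Z × ℝ)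
    (hB : ∀ u v, B u v =
      (((1 : ℝ)/2) • (u.2.2 • v.1 - v.2.2 • u.1),
        ω u.1 v.1 + u.2.2 • v.2.1 - v.2.2 • u.2.1, (0 : ℝ)))
    (ip : V × Z × ℝ → V × Z × ℝ → ℝ)
    (hip : ∀ u v, ip u v = ⟪u.1, v.1⟫ + ⟪u.2.1, v.2.1⟫ + u.2.2 * v.2.2 / c ^ 2)
    (nabla : V × Z × ℝ → V × Z × ℝ → V × Z × ℝ)
    (hK : ∀ u v w, 2 * ip (nabla u v) w
      = ip (B u v) w + ip (B w u) v + ip (B w v) u) :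
    (∀ z : Z, ⟪z, z⟫ = 1 →
      nabla ((0, z, 0) : V × Z × ℝ) ((0, z, 0) : V × Z × ℝ)
        = ((0, 0, c ^ 2) : V × Z × ℝ)) ∧
    (∀ (k : ℕ) (Zs : Fin k → Z),
      (∀ i i' : Fin k, ⟪Zs i, Zs i'⟫ = if i = i' then 1 else 0) →
      ∑ i, nabla ((0, Zs i, 0) : V × Z × ℝ) ((0, Zs i, 0) : V × Z × ℝ)
        = ((0, 0, c ^ 2 * k) : V × Z × ℝ)) := by
  have hc2 : (c : ℝ) ^ 2 ≠ 0 := by positivity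
  -- injectivity of ip
  have inj : ∀ a b : V × Z × ℝ, (∀ w, ip a w = ip b w) → a = b := by
    intro a b hab
    have h := hab (a - b)
    rw [hip, hip] at h
    have hd1 : (a - b).1 = a.1 - b.1 := rfl
    have hd2 : (a - b).2.1 = a.2.1 - b.2.1 := rfl
    have hd3 : (a - b).2.2 = a.2.2 - b.2.2 := rfl
    rw [hd1, hd2, hd3] at h
    have h1 : ⟪a.1 - b.1, a.1 - b.1⟫ + ⟪a.2.1 - b.2.1, a.2.1 - b.2.1⟫
        + (a.2.2 - b.2.2) ^ 2 / c ^ 2 = 0 := by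
      rw [inner_sub_left, inner_sub_left]
      field_simp at h ⊢
      nlinarith [h]
    have p1 : (0:ℝ) ≤ ⟪a.1 - b.1, a.1 - b.1⟫ := real_inner_self_nonneg
    have p2 : (0:ℝ) ≤ ⟪a.2.1 - b.2.1, a.2.1 - b.2.1⟫ := real_inner_self_nonneg
    have p3 : (0:ℝ) ≤ (a.2.2 - b.2.2) ^ 2 / c ^ 2 := by positivity
    have e1 : ⟪a.1 - b.1, a.1 - b.1⟫ = (0:ℝ) := by linarith
    have e2 : ⟪a.2.1 - b.2.1, a.2.1 - b.2.1⟫ = (0:ℝ) := by linarith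
    have e3 : (a.2.2 - b.2.2) ^ 2 / c ^ 2 = 0 := by linarith
    have f1 : a.1 = b.1 := by
      have := (inner_self_eq_zero (𝕜 := ℝ)).mp e1
      exact sub_eq_zero.mp this
    have f2 : a.2.1 = b.2.1 := by
      have := (inner_self_eq_zero (𝕜 := ℝ)).mp e2
      exact sub_eq_zero.mp this
    have f3 : a.2.2 = b.2.2 := by
      field_simp at e3
      nlinarith
    exact Prod.ext f1 (Prod.ext f2 f3)
  have key : ∀ z : Z, ⟪z, z⟫ = 1 →
      nabla ((0, z, 0) : V × Z × ℝ) ((0, z, 0) : V × Z × ℝ)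
        = ((0, 0, c ^ 2) : V × Z × ℝ) := by
    intro z hz
    apply inj
    intro w
    have h := hK (0, z, 0) (0, z, 0) w
    simp only [hB] at h
    simp only [hip] at h ⊢
    simp [real_inner_smul_left, hz] at h ⊢
    field_simp at h ⊢
    have hn : ‖z‖ ^ 2 = 1 := by rw [← real_inner_self_eq_norm_sq]; exact hz
    rw [hn] at h
    linarith
  refine ⟨key, ?_⟩
  intro k Zs horth
  have heach : ∀ i : Fin k,
      nabla ((0, Zs i, 0) : V × Z × ℝ) ((0, Zs i, 0) : V × Z × ℝ)
        = ((0, 0, c ^ 2) : V × Z × ℝ) := fun i => key _ (by simpa using horth i i)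
  rw [Finset.sum_congr rfl (fun i _ => heach i), Finset.sum_const]
  simp [Prod.ext_iff, mul_comm]
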